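/- arXiv:2605.23244 — 2 statements merged into one kernel-verified Lean document; each statement's English description precedes it below -/
import Mathlib

section
/- Let f : ℝ^d → ℝ be convex and differentiable with gradient ∇f Lipschitz continuous with constant L > 0, and suppose f attains a global minimum at x* ∈ ℝ^d. Define the accelerated gradient descent iterates by x_0 = y_0 ∈ ℝ^d, t_0 = 1, and for k ≥ 0: y_{k+1} = x_k − (1/L) ∇f(x_k), t_{k+1} = (1 + √(1 + 4 t_k²))/2, and x_{k+1} = y_{k+1} + ((t_k − 1)/t_{k+1})·(y_{k+1} − y_k). Then for every k ≥ 1, f(y_k) − f(x*) ≤ 2 L ‖x_0 − x*‖² / (k + 1)². -/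
open Set InnerProductSpace intervalIntegral

section Aux

variable {E : Type*} [NormedAddCommGroup E] [InnerProductSpace ℝ E] [CompleteSpace E]

local notation "⟪" x ", " y "⟫" => @inner ℝ _ _ x y

lemma agd_dir_deriv {f : E → ℝ} {f' : E → E} (hgrad : ∀ θ, HasGradientAt f (f' θ) θ)
    (a v : E) (s : ℝ) :
    HasDerivAt (fun s : ℝ => f (a + s • v)) ⟪f' (a + s • v), v⟫ s := by
  have h1 : HasDerivAt (fun s : ℝ => a + s • v) v s := by
    simpa using ((hasDerivAt_id s).smul_const v).const_add a
  have h2 := (hasGradientAt_iff_hasFDerivAt.1 (hgrad (a + s • v))).comp_hasDerivAt s h1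
  exact h2

lemma agd_convex_lower {f : E → ℝ} {f' : E → E} (hconv : ConvexOn ℝ Set.univ f)
    (hgrad : ∀ θ, HasGradientAt f (f' θ) θ) (a z : E) :
    f a + ⟪f' a, z - a⟫ ≤ f z := by
  set g : ℝ → ℝ := fun s => f (a + s • (z - a)) with hg
  have hgc : ConvexOn ℝ Set.univ g := by
    have := hconv.comp_affineMap (AffineMap.lineMap a z : ℝ →ᵃ[ℝ] E)
    rw [show g = f ∘ (AffineMap.lineMap a z : ℝ →ᵃ[ℝ] E) by
      ext s
      simp [hg, AffineMap.lineMap_apply, g, add_comm]]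
    exact this.subset (subset_preimage_univ) convex_univ
  have hd : HasDerivAt g ⟪f' a, z - a⟫ 0 := by
    have := agd_dir_deriv hgrad a (z - a) 0
    simpa using this
  have := hgc.le_slope_of_hasDerivAt (mem_univ (0:ℝ)) (mem_univ (1:ℝ)) one_pos hd
  rw [slope_def_field] at this
  simp [g] at this
  linarith

lemma agd_descent {f : E → ℝ} {f' : E → E} {L : ℝ} (hL : 0 < L)
    (hgrad : ∀ θ, HasGradientAt f (f' θ) θ)
    (hlip : ∀ a b : E, ‖f' a - f' b‖ ≤ L * ‖a - b‖) (a b : E) :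
    f b ≤ f a + ⟪f' a, b - a⟫ + L / 2 * ‖b - a‖ ^ 2 := by
  have hcont : Continuous f' := by
    apply (LipschitzWith.of_dist_le_mul (K := L.toNNReal) ?_).continuous
    intro p q
    rw [dist_eq_norm, dist_eq_norm]
    simpa [Real.coe_toNNReal _ hL.le] using hlip p q
  set v := b - a with hv
  set g' : ℝ → ℝ := fun s => ⟪f' (a + s • v), v⟫ with hg'
  have hgc : Continuous g' := by
    apply Continuous.inner
    · exact hcont.comp (by continuity)
    · exact continuous_const
  have hint : f b - f a = ∫ s in (0:ℝ)..1, g' s := by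
    rw [integral_eq_sub_of_hasDerivAt (fun s _ => agd_dir_deriv hgrad a v s)
      (hgc.intervalIntegrable 0 1)]
    simp [hv]
  have hbound : ∀ s ∈ Icc (0:ℝ) 1, g' s ≤ g' 0 + L * s * ‖v‖ ^ 2 := by
    intro s hs
    have h1 : g' s - g' 0 = ⟪f' (a + s • v) - f' a, v⟫ := by
      simp [hg', inner_sub_left]
    have h2 : ⟪f' (a + s • v) - f' a, v⟫ ≤ ‖f' (a + s • v) - f' a‖ * ‖v‖ :=
      real_inner_le_norm _ _
    have h3 : ‖f' (a + s • v) - f' a‖ ≤ L * (s * ‖v‖) := by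
      have := hlip (a + s • v) a
      simpa [norm_smul, abs_of_nonneg hs.1] using this
    nlinarith [norm_nonneg v, mul_le_mul_of_nonneg_right h3 (norm_nonneg v)]
  have hmono : (∫ s in (0:ℝ)..1, g' s) ≤ ∫ s in (0:ℝ)..1, (g' 0 + L * s * ‖v‖ ^ 2) := by
    apply integral_mono_on zero_le_one (hgc.intervalIntegrable 0 1)
    · exact ((continuous_const.add ((continuous_const.mul continuous_id).mul
        continuous_const)).intervalIntegrable 0 1)
    · exact hbound
  have hval : (∫ s in (0:ℝ)..1, (g' 0 + L * s * ‖v‖ ^ 2)) = g' 0 + L / 2 * ‖v‖ ^ 2 := by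
    rw [intervalIntegral.integral_add (intervalIntegrable_const)
      ((Continuous.intervalIntegrable (by continuity : Continuous fun s : ℝ => L * s * ‖v‖ ^ 2)) 0 1)]
    have : (∫ s in (0:ℝ)..1, L * s * ‖v‖ ^ 2) = L / 2 * ‖v‖ ^ 2 := by
      have : (fun s : ℝ => L * s * ‖v‖ ^ 2) = fun s : ℝ => (L * ‖v‖ ^ 2) * s := by
        ext s; ring
      rw [this, intervalIntegral.integral_const_mul, integral_id]
      ring
    rw [this]
    simp
  have hg0 : g' 0 = ⟪f' a, b - a⟫ := by simp [hg', hv]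
  linarith [hint, hmono, hval.le, hval.ge]

/-- key per-step inequality for the gradient step. -/
lemma agd_key {f : E → ℝ} {f' : E → E} {L : ℝ} (hL : 0 < L)
    (hconv : ConvexOn ℝ Set.univ f)
    (hgrad : ∀ θ, HasGradientAt f (f' θ) θ)
    (hlip : ∀ a b : E, ‖f' a - f' b‖ ≤ L * ‖a - b‖) (a z : E) :
    f (a - (1 / L) • f' a) ≤ f z + ⟪f' a, a - z⟫ - 1 / (2 * L) * ‖f' a‖ ^ 2 := by
  have h1 := agd_descent hL hgrad hlip a (a - (1 / L) • f' a)
  have h2 := agd_convex_lower hconv hgrad a z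
  have e1 : a - (1 / L) • f' a - a = -((1 / L) • f' a) := by abel
  have e2 : ⟪f' a, -((1 / L) • f' a)⟫ = -(1 / L) * ‖f' a‖ ^ 2 := by
    rw [inner_neg_right, real_inner_smul_right, real_inner_self_eq_norm_sq]
    ring
  have e3 : ‖-((1 / L) • f' a)‖ ^ 2 = (1 / L) ^ 2 * ‖f' a‖ ^ 2 := by
    rw [norm_neg, norm_smul, Real.norm_eq_abs, abs_of_pos (by positivity : (0:ℝ) < 1 / L)]
    ring
  rw [e1, e2, e3] at h1
  have e4 : ⟪f' a, z - a⟫ = -⟪f' a, a - z⟫ := by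
    rw [← inner_neg_right]; congr 1; abel
  rw [e4] at h2
  have e5 : L / 2 * ((1 / L) ^ 2 * ‖f' a‖ ^ 2) = 1 / (2 * L) * ‖f' a‖ ^ 2 := by
    field_simp
  have e6 : -(1 / L) * ‖f' a‖ ^ 2 + 1 / (2 * L) * ‖f' a‖ ^ 2 = -(1 / (2 * L)) * ‖f' a‖ ^ 2 := by
    field_simp
    ring
  rw [e5] at h1
  linarith

/-- norm identity. -/
lemma agd_norm_id (w g : E) (c : ℝ) :
    ‖w‖ ^ 2 - ‖w - c • g‖ ^ 2 = 2 * c * ⟪g, w⟫ - c ^ 2 * ‖g‖ ^ 2 := by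
  rw [norm_sub_sq_real, real_inner_smul_right, norm_smul, real_inner_comm w g,
    Real.norm_eq_abs, mul_pow, sq_abs]
  ring

end Aux

set_option maxHeartbeats 2000000 in
/-- Accelerated gradient descent: if `f : ℝ^d → ℝ` is convex with `L`-Lipschitz
gradient and global minimizer `x*`, then Nesterov's iterates satisfy
`f(y_k) − f(x*) ≤ 2 L ‖x_0 − x*‖² / (k + 1)²` for all `k ≥ 1`. -/
theorem accelerated_gradient_descent_convergence
    (d : ℕ) (f : EuclideanSpace ℝ (Fin d) → ℝ)
    (f' : EuclideanSpace ℝ (Fin d) → EuclideanSpace ℝ (Fin d))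
    (L : ℝ) (hL : 0 < L)
    (hconv : ConvexOn ℝ Set.univ f)
    (hgrad : ∀ θ, HasGradientAt f (f' θ) θ)
    (hlip : ∀ a b : EuclideanSpace ℝ (Fin d), ‖f' a - f' b‖ ≤ L * ‖a - b‖)
    (xstar : EuclideanSpace ℝ (Fin d)) (hmin : ∀ z, f xstar ≤ f z)
    (x y : ℕ → EuclideanSpace ℝ (Fin d)) (t : ℕ → ℝ)
    (hinit : x 0 = y 0) (ht0 : t 0 = 1)
    (hy : ∀ k : ℕ, y (k + 1) = x k - (1 / L) • f' (x k))
    (ht : ∀ k : ℕ, t (k + 1) = (1 + Real.sqrt (1 + 4 * (t k) ^ 2)) / 2)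
    (hx : ∀ k : ℕ, x (k + 1) = y (k + 1) + ((t k - 1) / t (k + 1)) • (y (k + 1) - y k)) :
    ∀ k : ℕ, 1 ≤ k →
      f (y k) - f xstar ≤ 2 * L * ‖x 0 - xstar‖ ^ 2 / ((k : ℝ) + 1) ^ 2 := by
  -- properties of t
  have ht_ge : ∀ k : ℕ, ((k : ℝ) + 2) / 2 ≤ t k := by
    intro k
    induction k with
    | zero => simp [ht0]
    | succ n ih =>
      have h0 : (0:ℝ) ≤ t n := le_trans (by positivity) ih
      have hs : 2 * t n ≤ Real.sqrt (1 + 4 * t n ^ 2) := by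
        rw [show (2 * t n) = Real.sqrt ((2 * t n) ^ 2) from
          (Real.sqrt_sq (by positivity)).symm]
        apply Real.sqrt_le_sqrt
        nlinarith
      rw [ht n]
      push_cast
      linarith [ih]
  have ht1 : ∀ k : ℕ, 1 ≤ t k := by
    intro k
    have h1 : (1:ℝ) ≤ ((k:ℝ) + 2) / 2 := by
      have : (0:ℝ) ≤ (k:ℝ) := Nat.cast_nonneg k
      linarith
    linarith [ht_ge k]
  have ht_pos : ∀ k : ℕ, 0 < t k := fun k => lt_of_lt_of_le one_pos (ht1 k)
  have ht_sq : ∀ k : ℕ, t (k + 1) ^ 2 - t (k + 1) = t k ^ 2 := by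
    intro k
    have harg : (0:ℝ) ≤ 1 + 4 * t k ^ 2 := by positivity
    have hs : Real.sqrt (1 + 4 * t k ^ 2) ^ 2 = 1 + 4 * t k ^ 2 :=
      Real.sq_sqrt harg
    rw [ht k]
    nlinarith [hs]
  -- replace 1/L by c to keep all arithmetic polynomial
  obtain ⟨c, hcpos, hc⟩ : ∃ c : ℝ, 0 < c ∧ c = 1 / L := ⟨1 / L, by positivity, rfl⟩
  have hLc : L * c = 1 := by
    rw [hc]; field_simp
  -- key inequality, in terms of c
  have key : ∀ a z : EuclideanSpace ℝ (Fin d),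
      f (a - c • f' a) ≤ f z + ⟪f' a, a - z⟫_ℝ - 1 / 2 * c * ‖f' a‖ ^ 2 := by
    intro a z
    have h := agd_key hL hconv hgrad hlip a z
    have e : 1 / (2 * L) = 1 / 2 * c := by
      rw [hc]; ring
    rw [e, show (1:ℝ)/L = c from hc.symm] at h
    exact h
  have hy' : ∀ k : ℕ, y (k + 1) = x k - c • f' (x k) := by
    intro k; rw [hy k, hc]
  set δ : ℕ → ℝ := fun k => f (y k) - f xstar with hδ
  have hδ_nonneg : ∀ k, 0 ≤ δ k := fun k => sub_nonneg.2 (hmin (y k))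
  set u : ℕ → EuclideanSpace ℝ (Fin d) :=
    fun k => t (k - 1) • y k - (t (k - 1) - 1) • y (k - 1) - xstar with hu
  have hu_succ : ∀ k : ℕ, u (k + 1) = t k • y (k + 1) - (t k - 1) • y k - xstar := by
    intro k; simp [hu]
  -- base case
  have base : 2 * c * (t 0) ^ 2 * δ 1 + ‖u 1‖ ^ 2 ≤ ‖x 0 - xstar‖ ^ 2 := by
    have hk := key (x 0) xstar
    rw [← hy' 0] at hk
    have hk' : f (y 1) ≤ f xstar + ⟪f' (x 0), x 0 - xstar⟫_ℝ
        - 1 / 2 * c * ‖f' (x 0)‖ ^ 2 := hk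
    have hu1 : u 1 = (x 0 - xstar) - c • f' (x 0) := by
      rw [hu_succ 0, ht0, hy' 0]
      module
    have hid := agd_norm_id (x 0 - xstar) (f' (x 0)) c
    rw [← hu1] at hid
    have hk'' : δ 1 ≤ ⟪f' (x 0), x 0 - xstar⟫_ℝ - 1 / 2 * c * ‖f' (x 0)‖ ^ 2 := by
      have hδ1 : δ 1 = f (y 1) - f xstar := rfl
      linarith [hk']
    have hmul' := mul_le_mul_of_nonneg_left hk''
      (by positivity : (0:ℝ) ≤ 2 * c)
    rw [ht0]
    clear hc hLc
    ring_nf at hid hmul' ⊢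
    linarith [hid, hmul']
  -- inductive step
  have step : ∀ k : ℕ, 2 * c * (t (k + 1)) ^ 2 * δ (k + 2) + ‖u (k + 2)‖ ^ 2
      ≤ 2 * c * (t k) ^ 2 * δ (k + 1) + ‖u (k + 1)‖ ^ 2 := by
    intro k
    set τ := t (k + 1) with hτ
    set g := f' (x (k + 1)) with hgdef
    set w := τ • x (k + 1) - (τ - 1) • y (k + 1) - xstar with hw
    have hτ1 : 1 ≤ τ := ht1 (k + 1)
    have hτpos : 0 < τ := ht_pos (k + 1)
    have hceq : τ * ((t k - 1) / τ) = t k - 1 := by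
      field_simp
    have hw_eq : w = u (k + 1) := by
      rw [hu_succ k, hw, hx k, ← hτ]
      rw [smul_add, smul_smul, hceq]
      module
    have hu2 : u (k + 2) = w - (τ * c) • g := by
      rw [hu_succ (k + 1), hw, hy' (k + 1), ← hτ, ← hgdef]
      rw [smul_sub, smul_smul]
      module
    have hw2 : w = (τ - 1) • (x (k + 1) - y (k + 1)) + (x (k + 1) - xstar) := by
      rw [hw]; module
    have hinner : ⟪g, w⟫_ℝ = (τ - 1) * ⟪g, x (k + 1) - y (k + 1)⟫_ℝ
        + ⟪g, x (k + 1) - xstar⟫_ℝ := by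
      rw [hw2, inner_add_right, real_inner_smul_right]
    have k1 := key (x (k + 1)) (y (k + 1))
    have k2 := key (x (k + 1)) xstar
    rw [← hy' (k + 1)] at k1 k2
    have hd1 : f (y (k + 2)) = δ (k + 2) + f xstar := by simp [hδ]
    have hd2 : f (y (k + 1)) = δ (k + 1) + f xstar := by simp [hδ]
    rw [hd1, hd2, ← hgdef] at k1
    rw [hd1, ← hgdef] at k2
    have hid := agd_norm_id w g (τ * c)
    rw [← hu2] at hid
    rw [hw_eq] at hid
    rw [hw_eq] at hinner
    rw [hinner] at hid
    have m1 := mul_le_mul_of_nonneg_left k1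
      (mul_nonneg (mul_nonneg (by linarith : (0:ℝ) ≤ 2 * τ)
        (by linarith : (0:ℝ) ≤ τ - 1)) hcpos.le)
    have m2 := mul_le_mul_of_nonneg_left k2
      (mul_nonneg (by linarith : (0:ℝ) ≤ 2 * τ) hcpos.le)
    have hsq := ht_sq k
    rw [← hτ] at hsq
    rw [← hsq]
    clear hc hLc
    ring_nf at hid m1 m2 ⊢
    linarith [hid, m1, m2]
  -- telescoping
  have main : ∀ k : ℕ, 2 * c * (t k) ^ 2 * δ (k + 1) + ‖u (k + 1)‖ ^ 2
      ≤ ‖x 0 - xstar‖ ^ 2 := by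
    intro k
    induction k with
    | zero => exact base
    | succ n ih => exact le_trans (step n) ih
  -- conclusion
  intro k hk
  obtain ⟨m, rfl⟩ : ∃ m, k = m + 1 := ⟨k - 1, (Nat.succ_pred_eq_of_pos hk).symm⟩
  have hm := main m
  have hT : ((m : ℝ) + 2) ^ 2 / 4 ≤ (t m) ^ 2 := by
    have h1 := ht_ge m
    have h2 : (0:ℝ) ≤ ((m:ℝ) + 2) / 2 := by positivity
    nlinarith
  have hR : (0:ℝ) ≤ ‖x 0 - xstar‖ ^ 2 := by positivity
  set X : ℝ := (t m) ^ 2 * δ (m + 1) with hX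
  have h1 : 2 * c * X ≤ ‖x 0 - xstar‖ ^ 2 := by
    have hu0 := sq_nonneg ‖u (m + 1)‖
    nlinarith [hm]
  have h2 : 2 * X ≤ L * ‖x 0 - xstar‖ ^ 2 := by
    have h3 := mul_le_mul_of_nonneg_left h1 hL.le
    have e : L * (2 * c * X) = 2 * X := by
      calc L * (2 * c * X) = (L * c) * (2 * X) := by ring
        _ = 2 * X := by rw [hLc, one_mul]
    linarith [e.le, e.ge]
  have hTδ : ((m:ℝ) + 2) ^ 2 * δ (m + 1) ≤ 4 * X := by
    rw [hX]
    nlinarith [hδ_nonneg (m + 1), hT]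
  have hgoal : f (y (m + 1)) - f xstar ≤ 2 * L * ‖x 0 - xstar‖ ^ 2 / ((m : ℝ) + 2) ^ 2 := by
    rw [le_div_iff₀ (by positivity : (0:ℝ) < ((m:ℝ) + 2) ^ 2)]
    have hδk' : f (y (m + 1)) - f xstar = δ (m + 1) := rfl
    rw [hδk']
    linarith [hTδ, h2]
  have hcast : ((m + 1 : ℕ) : ℝ) + 1 = (m : ℝ) + 2 := by push_cast; ring
  rw [hcast]
  exact hgoal
end

section
/- Let X be a real n × d matrix, let D_1, …, D_P be diagonal n × n matrices with diagonal entries in {0, 1}, and let v_1, …, v_P, w_1, …, w_P ∈ ℝ^d satisfy the cone constraints (2 D_i − I) X v_i ≥ 0 and (2 D_i − I) X w_i ≥ 0 componentwise for every i. Then there exist first-layer weight vectors Θ_1, …, Θ_{2P} ∈ ℝ^d and second-layer scalars θ_1, …, θ_{2P} ∈ ℝ such that Σ_{j=1}^{2P} max(X Θ_j, 0) · θ_j = Σ_{i=1}^P D_i X (v_i − w_i) (where max(·,0) is applied coordinatewise to the vector X Θ_j ∈ ℝ^n) and (1/2) Σ_{j=1}^{2P} (‖Θ_j‖² + θ_j²)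 = Σ_{i=1}^P (‖v_i‖ + ‖w_i‖). -/
lemma relu_key {n dd : ℕ} (X : Matrix (Fin n) (Fin dd) ℝ)
    (Dr : Fin n → ℝ) (hD : ∀ r, Dr r = 0 ∨ Dr r = 1)
    (u : EuclideanSpace ℝ (Fin dd))
    (hu : ∀ r, (2 * Dr r - 1) * X.mulVec u r ≥ 0) (r : Fin n) :
    max (X.mulVec ((Real.sqrt ‖u‖)⁻¹ • u) r) 0 * Real.sqrt ‖u‖
      = Dr r * X.mulVec u r := by
  have hmax : max (X.mulVec u r) 0 = Dr r * X.mulVec u r := by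
    rcases hD r with h | h <;> rw [h]
    · have := hu r
      rw [h] at this
      have : X.mulVec u r ≤ 0 := by nlinarith
      simp [max_eq_right this]
    · have := hu r
      rw [h] at this
      have : 0 ≤ X.mulVec u r := by nlinarith
      simp [max_eq_left this]
  by_cases h : u = 0
  · have h0 : X.mulVec u r = 0 := by
      have : (u : Fin dd → ℝ) = 0 := by rw [h]; simp
      simp [this, Matrix.mulVec_zero]
    simp [h, h0]
  · have hs : 0 < Real.sqrt ‖u‖ := Real.sqrt_pos.mpr (norm_pos_iff.mpr h)
    have hmv : X.mulVec ((Real.sqrt ‖u‖)⁻¹ • u) = (Real.sqrt ‖u‖)⁻¹ • X.mulVec u :=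
      Matrix.mulVec_smul X _ u
    rw [hmv, Pi.smul_apply, smul_eq_mul]
    have h1 : max ((Real.sqrt ‖u‖)⁻¹ * X.mulVec u r) 0
        = (Real.sqrt ‖u‖)⁻¹ * max (X.mulVec u r) 0 := by
      rw [mul_max_of_nonneg _ _ (by positivity : (0:ℝ) ≤ (Real.sqrt ‖u‖)⁻¹), mul_zero]
    rw [h1, mul_comm, ← mul_assoc, mul_inv_cancel₀ hs.ne', one_mul, hmax]

lemma relu_norm {dd : ℕ} (u : EuclideanSpace ℝ (Fin dd)) :
    ‖(Real.sqrt ‖u‖)⁻¹ • u‖ ^ 2 + (Real.sqrt ‖u‖) ^ 2 = 2 * ‖u‖ := by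
  by_cases h : u = 0
  · simp [h]
  · have hn : 0 < ‖u‖ := norm_pos_iff.mpr h
    have hs : 0 < Real.sqrt ‖u‖ := Real.sqrt_pos.mpr hn
    rw [norm_smul, Real.sq_sqrt hn.le]
    rw [norm_inv, Real.norm_eq_abs, abs_of_pos hs]
    rw [mul_pow, inv_pow, Real.sq_sqrt hn.le]
    field_simp
    ring

/-- Constructive direction of the convex reformulation of two-layer ReLU networks:
feasible points `(v_i, w_i)` of the convex program give a two-layer ReLU network with
`2P` neurons having the same prediction vector, whose weight-decay regularizer equals
the group-lasso penalty. -/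
theorem convex_feasible_point_realized_by_relu_network
    (n dd P : ℕ) (X : Matrix (Fin n) (Fin dd) ℝ)
    (D : Fin P → Fin n → ℝ) (hD : ∀ i r, D i r = 0 ∨ D i r = 1)
    (v w : Fin P → EuclideanSpace ℝ (Fin dd))
    (hv : ∀ i r, (2 * D i r - 1) * X.mulVec (v i) r ≥ 0)
    (hw : ∀ i r, (2 * D i r - 1) * X.mulVec (w i) r ≥ 0) :
    ∃ (Θ : Fin (2 * P) → EuclideanSpace ℝ (Fin dd)) (θ : Fin (2 * P) → ℝ),
      (∀ r : Fin n,
        ∑ j, max (X.mulVec (Θ j) r) 0 * θ j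
          = ∑ i, D i r * X.mulVec (v i - w i) r) ∧
      (1 / 2 : ℝ) * ∑ j, (‖Θ j‖ ^ 2 + (θ j) ^ 2)
        = ∑ i, (‖v i‖ + ‖w i‖) := by
  set e : Fin P ⊕ Fin P ≃ Fin (2 * P) :=
    finSumFinEquiv.trans (finCongr (two_mul P).symm) with he
  refine ⟨fun j => Sum.elim (fun i => (Real.sqrt ‖v i‖)⁻¹ • v i)
      (fun i => (Real.sqrt ‖w i‖)⁻¹ • w i) (e.symm j),
    fun j => Sum.elim (fun i => Real.sqrt ‖v i‖)
      (fun i => -Real.sqrt ‖w i‖) (e.symm j), ?_, ?_⟩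
  · intro r
    rw [← Equiv.sum_comp e]
    simp only [Equiv.symm_apply_apply]
    rw [Fintype.sum_sum_type]
    simp only [Sum.elim_inl, Sum.elim_inr]
    have hterm : ∀ i : Fin P,
        max (X.mulVec ((Real.sqrt ‖w i‖)⁻¹ • w i) r) 0 * (-Real.sqrt ‖w i‖)
          = -(D i r * X.mulVec (w i) r) := by
      intro i
      rw [mul_neg, relu_key X (D i) (hD i) (w i) (hw i) r]
    calc ∑ i, max (X.mulVec ((Real.sqrt ‖v i‖)⁻¹ • v i) r) 0 * Real.sqrt ‖v i‖
          + ∑ i, max (X.mulVec ((Real.sqrt ‖w i‖)⁻¹ • w i) r) 0 * (-Real.sqrt ‖w i‖)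
        = ∑ i, (D i r * X.mulVec (v i) r) + ∑ i, -(D i r * X.mulVec (w i) r) := by
          rw [Finset.sum_congr rfl fun i _ => relu_key X (D i) (hD i) (v i) (hv i) r,
            Finset.sum_congr rfl fun i _ => hterm i]
      _ = ∑ i, D i r * X.mulVec (v i - w i) r := by
          rw [← Finset.sum_add_distrib]
          refine Finset.sum_congr rfl fun i _ => ?_
          have : X.mulVec (v i - w i) = X.mulVec (v i) - X.mulVec (w i) :=
            Matrix.mulVec_sub X _ _
          rw [this, Pi.sub_apply]
          ring
  · rw [← Equiv.sum_comp e]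
    simp only [Equiv.symm_apply_apply]
    rw [Fintype.sum_sum_type]
    simp only [Sum.elim_inl, Sum.elim_inr]
    rw [Finset.sum_congr rfl fun i _ => relu_norm (v i),
      Finset.sum_congr rfl fun (i : Fin P) _ => (by rw [neg_sq]; exact relu_norm (w i) :
        ‖(Real.sqrt ‖w i‖)⁻¹ • w i‖ ^ 2 + (-Real.sqrt ‖w i‖) ^ 2 = 2 * ‖w i‖)]
    rw [← Finset.sum_add_distrib, Finset.mul_sum]
    refine Finset.sum_congr rfl fun i _ => by ring
end
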